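/- With J₁ = (x₂², x₂x₃^q, x₃^{q+1}) in k[x₂,x₃], for all m ≥ 1 one has the colon ideal containment (J₁^{m+2} : x₃^{2q+1}) ⊆ J₁^m. -/

import Mathlib

noncomputable section
open MvPolynomial Pointwise

variable {k : Type*} [Field k]

/-- `J₁ = (x₂², x₂x₃^q, x₃^{q+1})` in `T' = k[x₂,x₃]` (variables `X 0 = x₂`, `X 1 = x₃`). -/
def J1 (k : Type*) [Field k] (q : ℕ) : Ideal (MvPolynomial (Fin 2) k) :=
  Ideal.span {X 0 ^ 2, X 0 * X 1 ^ q, X 1 ^ (q + 1)}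

/-- `J₂ = (x₃^{2q+1})`. -/
def J2 (k : Type*) [Field k] (q : ℕ) : Ideal (MvPolynomial (Fin 2) k) :=
  Ideal.span {X 1 ^ (2 * q + 1)}

/-- `Iₙ = Σ_{a₁+2a₂=n} J₁^{a₁} J₂^{a₂}` (so `I₀ = T'`). -/
def filtI (k : Type*) [Field k] (q n : ℕ) : Ideal (MvPolynomial (Fin 2) k) :=
  ⨆ (a : ℕ × ℕ) (_ : a.1 + 2 * a.2 = n), J1 k q ^ a.1 * J2 k q ^ a.2

/-- exponent vectors of the natural generators of `J₁^m` -/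
def genSet (q m : ℕ) : Set (Fin 2 →₀ ℕ) :=
  {d | ∃ a b c : ℕ, a + b + c = m ∧
    d = Finsupp.single 0 (2 * a + b) + Finsupp.single 1 (q * b + (q + 1) * c)}

lemma genSet_add (q m n : ℕ) : genSet q (m + n) = genSet q m + genSet q n := by
  ext d
  constructor
  · rintro ⟨a, b, c, habc, rfl⟩
    -- split (a,b,c) into a part summing to m and a part summing to n
    obtain ⟨a1, b1, c1, a2, b2, c2, h1, h2, ha, hb, hc⟩ :
        ∃ a1 b1 c1 a2 b2 c2 : ℕ, a1 + b1 + c1 = m ∧ a2 + b2 + c2 = n ∧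
          a = a1 + a2 ∧ b = b1 + b2 ∧ c = c1 + c2 := by
      refine ⟨min a m, min b (m - min a m), m - min a m - min b (m - min a m),
        a - min a m, b - min b (m - min a m), c - (m - min a m - min b (m - min a m)),
        ?_, ?_, ?_, ?_, ?_⟩ <;> omega
    refine ⟨Finsupp.single 0 (2 * a1 + b1) + Finsupp.single 1 (q * b1 + (q + 1) * c1),
      ⟨a1, b1, c1, h1, rfl⟩,
      Finsupp.single 0 (2 * a2 + b2) + Finsupp.single 1 (q * b2 + (q + 1) * c2),
      ⟨a2, b2, c2, h2, rfl⟩, ?_⟩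
    subst ha hb hc
    ext i
    simp [Finsupp.single_apply, Finsupp.add_apply]
    split <;> split <;> ring_nf <;> omega
  · rintro ⟨d1, ⟨a1, b1, c1, h1, rfl⟩, d2, ⟨a2, b2, c2, h2, rfl⟩, rfl⟩
    refine ⟨a1 + a2, b1 + b2, c1 + c2, by omega, ?_⟩
    ext i
    simp [Finsupp.single_apply, Finsupp.add_apply]
    split <;> split <;> ring_nf <;> omega

lemma J1_pow_eq (q m : ℕ) :
    J1 k q ^ m = Ideal.span ((fun s => monomial s (1 : k)) '' genSet q m) := by
  induction m with
  | zero =>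
    have h0 : genSet q 0 = {0} := by
      ext d
      constructor
      · rintro ⟨a, b, c, habc, rfl⟩
        have : a = 0 ∧ b = 0 ∧ c = 0 := by omega
        simp [this.1, this.2.1, this.2.2]
      · rintro rfl; exact ⟨0, 0, 0, by omega, by simp⟩
    simp [h0, Ideal.span_singleton_one]
  | succ n ih =>
    have hJ1 : J1 k q = Ideal.span ((fun s => monomial s (1 : k)) '' genSet q 1) := by
      have hset : ((fun s => monomial s (1 : k)) '' genSet q 1) =
          {X 0 ^ 2, X 0 * X 1 ^ q, X 1 ^ (q + 1)} := by
        ext p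
        constructor
        · rintro ⟨d, ⟨a, b, c, habc, rfl⟩, rfl⟩
          rcases (by omega : (a = 1 ∧ b = 0 ∧ c = 0) ∨ (a = 0 ∧ b = 1 ∧ c = 0) ∨
              (a = 0 ∧ b = 0 ∧ c = 1)) with ⟨rfl, rfl, rfl⟩ | ⟨rfl, rfl, rfl⟩ | ⟨rfl, rfl, rfl⟩
          · left
            simp [X_pow_eq_monomial]
          · right; left
            simp [X_pow_eq_monomial, X, monomial_mul, monomial_pow, Finsupp.smul_single]
          · right; right
            simp [X_pow_eq_monomial]
        · rintro (rfl | rfl | rfl)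
          · exact ⟨_, ⟨1, 0, 0, by omega, rfl⟩, by simp [X_pow_eq_monomial]⟩
          · exact ⟨_, ⟨0, 1, 0, by omega, rfl⟩, by
              simp [X_pow_eq_monomial, X, monomial_mul, monomial_pow, Finsupp.smul_single]⟩
          · exact ⟨_, ⟨0, 0, 1, by omega, rfl⟩, by simp [X_pow_eq_monomial]⟩
      rw [J1, hset]
    rw [pow_succ, ih, hJ1, Ideal.span_mul_span']
    congr 1
    rw [show n + 1 = n + 1 from rfl, genSet_add q n 1]
    ext p
    constructor
    · rintro ⟨x, ⟨d1, hd1, rfl⟩, y, ⟨d2, hd2, rfl⟩, rfl⟩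
      exact ⟨d1 + d2, ⟨d1, hd1, d2, hd2, rfl⟩, by simp [monomial_mul]⟩
    · rintro ⟨d, ⟨d1, hd1, d2, hd2, rfl⟩, rfl⟩
      exact ⟨monomial d1 1, ⟨d1, hd1, rfl⟩, monomial d2 1, ⟨d2, hd2, rfl⟩, by
        simp [monomial_mul]⟩

lemma key_nat (q m a b c i j : ℕ) (hq : 1 ≤ q)
    (habc : a + b + c = m + 2) (hx : 2 * a + b ≤ i)
    (hy : q * b + (q + 1) * c ≤ j + (2 * q + 1)) :
    ∃ a' b' c' : ℕ, a' + b' + c' = m ∧ 2 * a' + b' ≤ i ∧ q * b' + (q + 1) * c' ≤ j := by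
  rcases (by omega : 2 ≤ c ∨ (c = 1 ∧ 1 ≤ b) ∨ (c = 1 ∧ b = 0) ∨ (c = 0 ∧ 3 ≤ b) ∨
      (c = 0 ∧ b ≤ 2)) with hc | ⟨rfl, hb⟩ | ⟨rfl, rfl⟩ | ⟨rfl, hb⟩ | ⟨rfl, hb⟩
  · obtain ⟨c2, rfl⟩ : ∃ c2, c = c2 + 2 := ⟨c - 2, by omega⟩
    refine ⟨a, b, c2, by omega, hx, by nlinarith⟩
  · obtain ⟨b1, rfl⟩ : ∃ b1, b = b1 + 1 := ⟨b - 1, by omega⟩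
    refine ⟨a, b1, 0, by omega, by omega, by nlinarith⟩
  · exact ⟨m, 0, 0, by omega, by omega, by simp⟩
  · obtain ⟨b3, rfl⟩ : ∃ b3, b = b3 + 3 := ⟨b - 3, by omega⟩
    refine ⟨a + 1, b3, 0, by omega, by omega, by nlinarith⟩
  · exact ⟨m, 0, 0, by omega, by omega, by simp⟩

/-- for all m ≥ 1, (J₁^{m+2} : x₃^{2q+1}) ⊆ J₁^m. -/
theorem stmt_4 (q : ℕ) (hq : 1 ≤ q) (m : ℕ) (hm : 1 ≤ m) :
    (J1 k q ^ (m + 2)).colon ((Ideal.span {X 1 ^ (2 * q + 1)} : Ideal (MvPolynomial (Fin 2) k)) : Set (MvPolynomial (Fin 2) k)) ≤ J1 k q ^ m := by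
  intro f hf
  rw [Ideal.mem_colon_span_singleton, J1_pow_eq, mem_ideal_span_monomial_image] at hf
  rw [J1_pow_eq, mem_ideal_span_monomial_image]
  intro d hd
  have hd' : d + Finsupp.single 1 (2 * q + 1) ∈ (f * X 1 ^ (2 * q + 1)).support := by
    rw [X_pow_eq_monomial, mem_support_iff, coeff_mul_monomial]
    simpa using (mem_support_iff.mp hd)
  obtain ⟨s, ⟨a, b, c, habc, rfl⟩, hs⟩ := hf _ hd'
  rw [Finsupp.le_def] at hs
  have hx := hs 0
  have hy := hs 1
  simp [Finsupp.single_apply, Finsupp.add_apply] at hx hy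
  obtain ⟨a', b', c', h1, h2, h3⟩ := key_nat q m a b c (d 0) (d 1) hq habc hx hy
  refine ⟨_, ⟨a', b', c', h1, rfl⟩, ?_⟩
  rw [Finsupp.le_def]
  intro i
  fin_cases i <;> simp [Finsupp.single_apply, Finsupp.add_apply] <;> assumption
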